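/- For any ε > 0, T > 0, s ≥ 0, R > 0 with s² + R² = T² and zⁿ ∈ ℝⁿ with |zⁿ| = s: the set B(zⁿ,R) ∩ B_{T−ε} in ℝⁿ is contained in a Euclidean ball of some radius R₁ < R (with R₁ independent of n, depending only on s, R, ε), and similarly B(zⁿ,R) \ B_{T+ε} is contained in a ball of radius R₂ < R. Consequently |B(zⁿ,R) ∩ B_{T−ε}|/|B(zⁿ,R)| ≤ (R₁/R)ⁿ → 0 and |B(zⁿ,R) \ B_{T+ε}|/|B(zⁿ,R)| ≤ (R₂/R)ⁿ → 0 as n → ∞. -/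

import Mathlib

open MeasureTheory Metric Filter
open scoped ENNReal

/-- Volume ratio bound from a closed-ball containment. -/
lemma aux_vol_ratio {n : ℕ} (S : Set (EuclideanSpace ℝ (Fin (n + 1))))
    (c z : EuclideanSpace ℝ (Fin (n + 1))) {r R : ℝ} (hr : 0 ≤ r) (hR : 0 < R)
    (hS : S ⊆ closedBall c r) :
    volume S / volume (ball z R) ≤ ENNReal.ofReal ((r / R) ^ (n + 1)) := by
  have hd : Module.finrank ℝ (EuclideanSpace ℝ (Fin (n + 1))) = n + 1 := by simp
  have hB : volume (ball z R) = ENNReal.ofReal (R ^ (n + 1)) * volume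
      (ball (0 : EuclideanSpace ℝ (Fin (n + 1))) 1) := by
    rw [Measure.addHaar_ball volume z hR.le, hd]
  have hC : volume (closedBall c r) = ENNReal.ofReal (r ^ (n + 1)) * volume
      (ball (0 : EuclideanSpace ℝ (Fin (n + 1))) 1) := by
    rw [Measure.addHaar_closedBall volume c hr, hd]
  have hB0 : volume (ball z R) ≠ 0 := (measure_ball_pos volume z hR).ne'
  have hBt : volume (ball z R) ≠ ⊤ := measure_ball_lt_top.ne
  rw [ENNReal.div_le_iff hB0 hBt]
  calc volume S ≤ volume (closedBall c r) := measure_mono hS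
    _ = ENNReal.ofReal ((r / R) ^ (n + 1)) * volume (ball z R) := by
        rw [hB, hC, ← mul_assoc, ← ENNReal.ofReal_mul (by positivity)]
        congr 2
        rw [div_pow, div_mul_cancel₀ _ (pow_ne_zero _ hR.ne')]

set_option maxHeartbeats 1600000 in
theorem stmt_15 (T s R ε : ℝ) (hT : 0 < T) (hs : 0 ≤ s) (hR : 0 < R) (hε : 0 < ε)
    (hTsR : s ^ 2 + R ^ 2 = T ^ 2)
    (z : ∀ n : ℕ, EuclideanSpace ℝ (Fin (n + 1))) (hz : ∀ n, ‖z n‖ = s) :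
    ∃ R₁ ∈ Set.Ico (0 : ℝ) R, ∃ R₂ ∈ Set.Ico (0 : ℝ) R,
      (∀ n : ℕ, ∃ c : EuclideanSpace ℝ (Fin (n + 1)),
        ball (z n) R ∩ closedBall (0 : EuclideanSpace ℝ (Fin (n + 1))) (T - ε)
          ⊆ closedBall c R₁) ∧
      (∀ n : ℕ, ∃ c : EuclideanSpace ℝ (Fin (n + 1)),
        ball (z n) R \ closedBall (0 : EuclideanSpace ℝ (Fin (n + 1))) (T + ε)
          ⊆ closedBall c R₂) ∧
      (∀ n : ℕ,
        volume (ball (z n) R ∩ closedBall (0 : EuclideanSpace ℝ (Fin (n + 1))) (T - ε)) /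
            volume (ball (z n) R)
          ≤ ENNReal.ofReal ((R₁ / R) ^ (n + 1))) ∧
      (∀ n : ℕ,
        volume (ball (z n) R \ closedBall (0 : EuclideanSpace ℝ (Fin (n + 1))) (T + ε)) /
            volume (ball (z n) R)
          ≤ ENNReal.ofReal ((R₂ / R) ^ (n + 1))) ∧
      Tendsto (fun n : ℕ =>
        volume (ball (z n) R ∩ closedBall (0 : EuclideanSpace ℝ (Fin (n + 1))) (T - ε)) /
          volume (ball (z n) R)) atTop (nhds 0) ∧
      Tendsto (fun n : ℕ =>
        volume (ball (z n) R \ closedBall (0 : EuclideanSpace ℝ (Fin (n + 1))) (T + ε)) /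
          volume (ball (z n) R)) atTop (nhds 0) := by
  -- replace ε by ε' = min ε (T/2)
  set ε' : ℝ := min ε (T / 2) with hε'def
  have hε'0 : 0 < ε' := lt_min hε (by linarith)
  have hε'T : ε' ≤ T / 2 := min_le_right _ _
  have hε'ε : ε' ≤ ε := min_le_left _ _
  have hTε : 0 < T * ε' := mul_pos hT hε'0
  -- parameters
  set t₁ : ℝ := min 1 (T * ε' / (2 * (s ^ 2 + 1))) with ht₁def
  set t₂ : ℝ := min 1 (T * ε' / (s ^ 2 + 1)) with ht₂def
  have ht₁0 : 0 < t₁ := lt_min one_pos (by positivity)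
  have ht₁1 : t₁ ≤ 1 := min_le_left _ _
  have ht₂0 : 0 < t₂ := lt_min one_pos (by positivity)
  have ht₁s : t₁ * (s ^ 2 + 1) ≤ T * ε' / 2 := by
    have h := min_le_right 1 (T * ε' / (2 * (s ^ 2 + 1)))
    rw [← ht₁def] at h
    have hp : (0:ℝ) < s ^ 2 + 1 := by positivity
    calc t₁ * (s ^ 2 + 1) ≤ T * ε' / (2 * (s ^ 2 + 1)) * (s ^ 2 + 1) := by
          exact mul_le_mul_of_nonneg_right h hp.le
      _ = T * ε' / 2 := by field_simp
  have ht₂s : t₂ * (s ^ 2 + 1) ≤ T * ε' := by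
    have h := min_le_right 1 (T * ε' / (s ^ 2 + 1))
    rw [← ht₂def] at h
    have hp : (0:ℝ) < s ^ 2 + 1 := by positivity
    calc t₂ * (s ^ 2 + 1) ≤ T * ε' / (s ^ 2 + 1) * (s ^ 2 + 1) := by
          exact mul_le_mul_of_nonneg_right h hp.le
      _ = T * ε' := by field_simp
  have hδ₁ : 0 < t₁ * (2 * T * ε' - ε' ^ 2 - t₁ * s ^ 2) := by
    have h1 : ε' ^ 2 ≤ T / 2 * ε' := by nlinarith
    have h2 : t₁ * s ^ 2 ≤ T * ε' / 2 := by nlinarith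
    calc (0:ℝ) < t₁ * (T * ε' - ε' ^ 2 / 2) := mul_pos ht₁0 (by linarith)
      _ ≤ t₁ * (2 * T * ε' - ε' ^ 2 - t₁ * s ^ 2) :=
          mul_le_mul_of_nonneg_left (by linarith) ht₁0.le
  have hδ₂ : 0 < t₂ * (2 * T * ε' + ε' ^ 2 - t₂ * s ^ 2) := by
    have h2 : t₂ * s ^ 2 ≤ T * ε' := by nlinarith
    calc (0:ℝ) < t₂ * (T * ε' + ε' ^ 2) := by positivity
      _ ≤ t₂ * (2 * T * ε' + ε' ^ 2 - t₂ * s ^ 2) :=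
          mul_le_mul_of_nonneg_left (by linarith) ht₂0.le
  set R₁ : ℝ := Real.sqrt (R ^ 2 - t₁ * (2 * T * ε' - ε' ^ 2 - t₁ * s ^ 2)) with hR₁def
  set R₂ : ℝ := Real.sqrt (R ^ 2 - t₂ * (2 * T * ε' + ε' ^ 2 - t₂ * s ^ 2)) with hR₂def
  have hR₁lt : R₁ < R := by
    rw [hR₁def, Real.sqrt_lt' hR]; linarith
  have hR₂lt : R₂ < R := by
    rw [hR₂def, Real.sqrt_lt' hR]; linarith
  have hR₁0 : 0 ≤ R₁ := Real.sqrt_nonneg _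
  have hR₂0 : 0 ≤ R₂ := Real.sqrt_nonneg _
  -- containment 1
  have hc1 : ∀ n : ℕ, ball (z n) R ∩
      closedBall (0 : EuclideanSpace ℝ (Fin (n + 1))) (T - ε) ⊆
      closedBall ((1 - t₁) • z n) R₁ := by
    intro n x hx
    obtain ⟨hx1, hx2⟩ := hx
    rw [mem_ball, dist_eq_norm] at hx1
    rw [mem_closedBall, dist_zero_right] at hx2
    have hx2' : ‖x‖ ≤ T - ε' := hx2.trans (by linarith)
    have hTe : 0 ≤ T - ε' := by linarith
    rw [mem_closedBall, dist_eq_norm]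
    have hkey : ‖x - (1 - t₁) • z n‖ ^ 2 ≤
        R ^ 2 - t₁ * (2 * T * ε' - ε' ^ 2 - t₁ * s ^ 2) := by
      have heq : x - (1 - t₁) • z n = (x - z n) + t₁ • z n := by
        rw [sub_smul, one_smul]; abel
      have hexp : ‖x - (1 - t₁) • z n‖ ^ 2 = ‖x - z n‖ ^ 2 +
          2 * t₁ * (inner ℝ (x - z n) (z n) : ℝ) + t₁ ^ 2 * s ^ 2 := by
        rw [heq, norm_add_sq_real, real_inner_smul_right, norm_smul, hz n,
          Real.norm_eq_abs, abs_of_pos ht₁0]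
        ring
      have hx' : ‖x‖ ^ 2 = ‖x - z n‖ ^ 2 +
          2 * (inner ℝ (x - z n) (z n) : ℝ) + s ^ 2 := by
        have : x = (x - z n) + z n := by abel
        nth_rewrite 1 [this]
        rw [norm_add_sq_real, hz n]
      have h1 : ‖x - z n‖ ^ 2 ≤ R ^ 2 := by nlinarith [norm_nonneg (x - z n)]
      have h2 : ‖x‖ ^ 2 ≤ (T - ε') ^ 2 := by nlinarith [norm_nonneg x]
      nlinarith [mul_le_mul_of_nonneg_left h1 (by linarith : (0:ℝ) ≤ 1 - t₁),
        mul_le_mul_of_nonneg_left h2 ht₁0.le]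
    rw [hR₁def]
    have hy : 0 ≤ R ^ 2 - t₁ * (2 * T * ε' - ε' ^ 2 - t₁ * s ^ 2) :=
      le_trans (sq_nonneg _) hkey
    exact (Real.le_sqrt (norm_nonneg _) hy).mpr hkey
  -- containment 2
  have hc2 : ∀ n : ℕ, ball (z n) R \
      closedBall (0 : EuclideanSpace ℝ (Fin (n + 1))) (T + ε) ⊆
      closedBall ((1 + t₂) • z n) R₂ := by
    intro n x hx
    obtain ⟨hx1, hx2⟩ := hx
    rw [mem_ball, dist_eq_norm] at hx1
    rw [mem_closedBall, dist_zero_right, not_le] at hx2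
    have hx2' : T + ε' ≤ ‖x‖ := by linarith
    have hTe : 0 ≤ T + ε' := by linarith
    rw [mem_closedBall, dist_eq_norm]
    have hkey : ‖x - (1 + t₂) • z n‖ ^ 2 ≤
        R ^ 2 - t₂ * (2 * T * ε' + ε' ^ 2 - t₂ * s ^ 2) := by
      have heq : x - (1 + t₂) • z n = (x - z n) + (-t₂) • z n := by
        rw [add_smul, one_smul, neg_smul]; abel
      have hexp : ‖x - (1 + t₂) • z n‖ ^ 2 = ‖x - z n‖ ^ 2 -
          2 * t₂ * (inner ℝ (x - z n) (z n) : ℝ) + t₂ ^ 2 * s ^ 2 := by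
        rw [heq, norm_add_sq_real, real_inner_smul_right, norm_smul, hz n,
          Real.norm_eq_abs, abs_neg, abs_of_pos ht₂0]
        ring
      have hx' : ‖x‖ ^ 2 = ‖x - z n‖ ^ 2 +
          2 * (inner ℝ (x - z n) (z n) : ℝ) + s ^ 2 := by
        have : x = (x - z n) + z n := by abel
        nth_rewrite 1 [this]
        rw [norm_add_sq_real, hz n]
      have h1 : ‖x - z n‖ ^ 2 ≤ R ^ 2 := by nlinarith [norm_nonneg (x - z n)]
      have h2 : (T + ε') ^ 2 ≤ ‖x‖ ^ 2 := by nlinarith [norm_nonneg x]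
      nlinarith [mul_le_mul_of_nonneg_left h1 (by linarith : (0:ℝ) ≤ 1 + t₂),
        mul_le_mul_of_nonneg_left h2 ht₂0.le]
    rw [hR₂def]
    have hy : 0 ≤ R ^ 2 - t₂ * (2 * T * ε' + ε' ^ 2 - t₂ * s ^ 2) :=
      le_trans (sq_nonneg _) hkey
    exact (Real.le_sqrt (norm_nonneg _) hy).mpr hkey
  refine ⟨R₁, ⟨hR₁0, hR₁lt⟩, R₂, ⟨hR₂0, hR₂lt⟩,
    fun n => ⟨(1 - t₁) • z n, hc1 n⟩, fun n => ⟨(1 + t₂) • z n, hc2 n⟩,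
    fun n => aux_vol_ratio _ _ _ hR₁0 hR (hc1 n),
    fun n => aux_vol_ratio _ _ _ hR₂0 hR (hc2 n), ?_, ?_⟩
  · refine tendsto_of_tendsto_of_tendsto_of_le_of_le tendsto_const_nhds
      ?_ (fun n => zero_le ..) (fun n => aux_vol_ratio _ _ _ hR₁0 hR (hc1 n))
    have : Tendsto (fun n : ℕ => (R₁ / R) ^ (n + 1)) atTop (nhds 0) := by
      have h := tendsto_pow_atTop_nhds_zero_of_lt_one (by positivity)
        ((div_lt_one hR).mpr hR₁lt)
      exact h.comp (tendsto_add_atTop_nat 1)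
    simpa using (ENNReal.tendsto_ofReal this)
  · refine tendsto_of_tendsto_of_tendsto_of_le_of_le tendsto_const_nhds
      ?_ (fun n => zero_le ..) (fun n => aux_vol_ratio _ _ _ hR₂0 hR (hc2 n))
    have : Tendsto (fun n : ℕ => (R₂ / R) ^ (n + 1)) atTop (nhds 0) := by
      have h := tendsto_pow_atTop_nhds_zero_of_lt_one (by positivity)
        ((div_lt_one hR).mpr hR₂lt)
      exact h.comp (tendsto_add_atTop_nat 1)
    simpa using (ENNReal.tendsto_ofReal this)
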